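/- There exists a constant c > 0 such that for every n ≥ 2 and all real numbers a_{i,j} (1 ≤ i < j ≤ n), ∫₀¹ | ∑_{1≤i<j≤n} a_{i,j} r_i(t) r_j(t) | dt ≥ c · (∑_{1≤i<j≤n} a_{i,j}²)^{1/2}. That is, the L¹-norm of a Rademacher chaos sum of order 2 dominates (up to an absolute constant) the ℓ²-norm of its coefficients. -/

import Mathlib

open MeasureTheory ENNReal

/-- The Rademacher functions on `[0,1]`: `r k t = (-1)^⌊2^(k-1) t⌋` (for `k ≥ 1`). -/
noncomputable def rademacher (k : ℕ) (t : ℝ) : ℝ :=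
  (-1 : ℝ) ^ ⌊(2 : ℝ) ^ (k - 1) * t⌋

namespace ChaosAux

noncomputable def fct (k m : ℕ) : ℝ := (-1 : ℝ) ^ (m / 2 ^ k)

noncomputable def chi (S : Finset ℕ) (m : ℕ) : ℝ := ∏ k ∈ S, fct k m

lemma fct_mul_self (k m : ℕ) : fct k m * fct k m = 1 := by
  rw [fct, ← mul_pow]; norm_num

lemma chi_mul_self (S : Finset ℕ) (m : ℕ) : chi S m * chi S m = 1 := by
  rw [chi, ← Finset.prod_mul_distrib]
  exact Finset.prod_eq_one fun k _ => fct_mul_self k m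

lemma chi_empty (m : ℕ) : chi ∅ m = 1 := Finset.prod_empty

lemma chi_mul (S T : Finset ℕ) (m : ℕ) :
    chi S m * chi T m = chi (symmDiff S T) m := by
  classical
  have hS : chi S m = chi (S \ T) m * chi (S ∩ T) m := by
    rw [chi, chi, chi, ← Finset.prod_union (Finset.disjoint_sdiff_inter S T),
      Finset.sdiff_union_inter]
  have hT : chi T m = chi (T \ S) m * chi (S ∩ T) m := by
    rw [chi, chi, chi, Finset.inter_comm,
      ← Finset.prod_union (Finset.disjoint_sdiff_inter T S), Finset.sdiff_union_inter]
  have hST : chi (symmDiff S T) m = chi (S \ T) m * chi (T \ S) m := by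
    rw [symmDiff_def, Finset.sup_eq_union, chi, chi, chi,
      Finset.prod_union disjoint_sdiff_sdiff]
  have h2 := chi_mul_self (S ∩ T) m
  rw [hS, hT, hST]
  calc (chi (S \ T) m * chi (S ∩ T) m) * (chi (T \ S) m * chi (S ∩ T) m)
      = (chi (S \ T) m * chi (T \ S) m) * (chi (S ∩ T) m * chi (S ∩ T) m) := by ring
    _ = chi (S \ T) m * chi (T \ S) m := by rw [h2, mul_one]

lemma fct_shift {k N : ℕ} (hk : k < N) (m : ℕ) : fct k (2 ^ N + m) = fct k m := by
  have h2 : (2:ℕ) ^ N = 2 ^ k * 2 ^ (N - k) := by rw [← pow_add]; congr 1; omega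
  rw [fct, fct, h2, Nat.mul_add_div (by positivity), pow_add]
  have he : Even (2 ^ (N - k)) := by
    refine ⟨2 ^ (N - k - 1), ?_⟩
    rw [← two_mul, ← pow_succ']; congr 1; omega
  rw [he.neg_one_pow, one_mul]

lemma chi_shift {S : Finset ℕ} {N : ℕ} (hS : S ⊆ Finset.range N) (m : ℕ) :
    chi S (2 ^ N + m) = chi S m :=
  Finset.prod_congr rfl fun k hk => fct_shift (Finset.mem_range.mp (hS hk)) m

lemma chi_erase {S : Finset ℕ} {N : ℕ} (hN : N ∈ S) (m : ℕ) :
    chi S m = fct N m * chi (S.erase N) m := by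
  rw [chi, chi]; exact (Finset.mul_prod_erase S _ hN).symm

lemma fct_top_lt {N m : ℕ} (hm : m < 2 ^ N) : fct N m = 1 := by
  rw [fct, Nat.div_eq_of_lt hm, pow_zero]

lemma fct_top_ge {N m : ℕ} (hm : m < 2 ^ N) : fct N (2 ^ N + m) = -1 := by
  have : (2 ^ N + m) / 2 ^ N = 1 := by
    rw [add_comm, Nat.add_div_right _ (by positivity), Nat.div_eq_of_lt hm]
  rw [fct, this, pow_one]

lemma orth : ∀ (N : ℕ) (S : Finset ℕ), S ⊆ Finset.range N → S.Nonempty →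
    ∑ m ∈ Finset.range (2 ^ N), chi S m = 0 := by
  intro N
  induction N with
  | zero =>
    rintro S hS ⟨x, hx⟩
    exact absurd (hS hx) (by simp)
  | succ N ih =>
    intro S hS hne
    have hsplit : ∑ m ∈ Finset.range (2 ^ (N + 1)), chi S m
        = ∑ m ∈ Finset.range (2 ^ N), chi S m
          + ∑ m ∈ Finset.range (2 ^ N), chi S (2 ^ N + m) := by
      have h : 2 ^ (N + 1) = 2 ^ N + 2 ^ N := by rw [pow_succ, Nat.mul_two]
      rw [h, Finset.sum_range_add]
    by_cases hN : N ∈ S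
    · have hS' : S.erase N ⊆ Finset.range N := by
        intro k hk
        have h1 := Finset.mem_range.mp (hS (Finset.erase_subset _ _ hk))
        have h2 : k ≠ N := Finset.ne_of_mem_erase hk
        exact Finset.mem_range.mpr (by omega)
      have key1 : ∀ m ∈ Finset.range (2 ^ N), chi S m = chi (S.erase N) m := by
        intro m hm
        rw [chi_erase hN, fct_top_lt (Finset.mem_range.mp hm), one_mul]
      have key2 : ∀ m ∈ Finset.range (2 ^ N), chi S (2 ^ N + m) = -chi (S.erase N) m := by
        intro m hm
        rw [chi_erase hN, fct_top_ge (Finset.mem_range.mp hm), chi_shift hS' m]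
        ring
      rw [hsplit, Finset.sum_congr rfl key1, Finset.sum_congr rfl key2,
        Finset.sum_neg_distrib]
      ring
    · have hS' : S ⊆ Finset.range N := by
        intro k hk
        have h1 := Finset.mem_range.mp (hS hk)
        have h2 : k ≠ N := fun h => hN (h ▸ hk)
        exact Finset.mem_range.mpr (by omega)
      rw [hsplit, Finset.sum_congr rfl (fun m _ => chi_shift hS' m), ih S hS' hne]
      ring


lemma parseval {ι : Type*} (N : ℕ) (P : Finset ι) (σ : ι → Finset ℕ) (c : ι → ℝ)
    (hsub : ∀ p ∈ P, σ p ⊆ Finset.range N) (hinj : Set.InjOn σ P) :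
    ∑ m ∈ Finset.range (2 ^ N), (∑ p ∈ P, c p * chi (σ p) m) ^ 2
      = 2 ^ N * ∑ p ∈ P, c p ^ 2 := by
  classical
  have expand : ∀ m, (∑ p ∈ P, c p * chi (σ p) m) ^ 2
      = ∑ p ∈ P, ∑ q ∈ P, c p * c q * chi (symmDiff (σ p) (σ q)) m := by
    intro m
    rw [sq, Finset.sum_mul_sum]
    refine Finset.sum_congr rfl fun p _ => Finset.sum_congr rfl fun q _ => ?_
    rw [← chi_mul]; ring
  rw [Finset.sum_congr rfl fun m _ => expand m, Finset.sum_comm]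
  have inner : ∀ p ∈ P, (∑ m ∈ Finset.range (2 ^ N),
      ∑ q ∈ P, c p * c q * chi (symmDiff (σ p) (σ q)) m) = 2 ^ N * c p ^ 2 := by
    intro p hp
    rw [Finset.sum_comm]
    have hq : ∀ q ∈ P, (∑ m ∈ Finset.range (2 ^ N),
        c p * c q * chi (symmDiff (σ p) (σ q)) m)
        = if q = p then (2 : ℝ) ^ N * c p ^ 2 else 0 := by
      intro q hq
      by_cases hqp : q = p
      · subst hqp
        simp only [if_pos rfl]
        rw [symmDiff_self]
        have h1 : ∀ m, chi (⊥ : Finset ℕ) m = 1 := fun m => chi_empty m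
        simp only [h1, mul_one, Finset.sum_const, Finset.card_range, nsmul_eq_mul]
        push_cast; ring
      · rw [if_neg hqp, ← Finset.mul_sum]
        have hne : (symmDiff (σ p) (σ q)).Nonempty := by
          rw [Finset.nonempty_iff_ne_empty]
          intro h
          exact hqp (hinj hq hp (symmDiff_eq_bot.mp h).symm)
        have hsub2 : symmDiff (σ p) (σ q) ⊆ Finset.range N := by
          intro x hx
          have hle : symmDiff (σ p) (σ q) ≤ σ p ⊔ σ q := symmDiff_le_sup
          have hx' : x ∈ σ p ∪ σ q := hle hx
          rcases Finset.mem_union.mp hx' with h | h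
          exacts [hsub p hp h, hsub q hq h]
        rw [orth N _ hsub2 hne, mul_zero]
    rw [Finset.sum_congr rfl hq, Finset.sum_ite_eq' P p (fun _ => (2:ℝ) ^ N * c p ^ 2),
      if_pos hp]
  rw [Finset.sum_congr rfl inner, ← Finset.mul_sum]

lemma sq_le_sq_of (a b : ℝ) (h : a ^ 2 ≤ b ^ 2) (ha : 0 ≤ a) (hb : 0 ≤ b) : a ≤ b := by
  nlinarith

lemma bonami : ∀ (N : ℕ) (d : ℕ) (F : Finset (Finset ℕ)) (c : Finset ℕ → ℝ),
    (∀ S ∈ F, S ⊆ Finset.range N ∧ S.card ≤ d) →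
    (2:ℝ) ^ N * ∑ m ∈ Finset.range (2 ^ N), (∑ S ∈ F, c S * chi S m) ^ 4
      ≤ 9 ^ d * (∑ m ∈ Finset.range (2 ^ N), (∑ S ∈ F, c S * chi S m) ^ 2) ^ 2 := by
  classical
  intro N
  induction N with
  | zero =>
    intro d F c _
    simp only [pow_zero, one_mul, Finset.range_one, Finset.sum_singleton]
    set v := ∑ S ∈ F, c S * chi S 0 with hv
    have h9 : (1:ℝ) ≤ 9 ^ d := one_le_pow₀ (by norm_num)
    have h2 := mul_le_mul_of_nonneg_right h9 (sq_nonneg (v ^ 2))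
    calc v ^ 4 = 1 * (v ^ 2) ^ 2 := by ring
      _ ≤ 9 ^ d * (v ^ 2) ^ 2 := h2
  | succ N ih =>
    intro d F c hF
    set F₀ := F.filter (fun S => N ∉ S) with hF₀def
    set F₁ := F.filter (fun S => N ∈ S) with hF₁def
    set g : ℕ → ℝ := fun m => ∑ S ∈ F₀, c S * chi S m with hgdef
    set h : ℕ → ℝ := fun m => ∑ S ∈ F₁, c S * chi (S.erase N) m with hhdef
    have hsub₀ : ∀ S ∈ F₀, S ⊆ Finset.range N ∧ S.card ≤ d := by
      intro S hS
      rw [hF₀def, Finset.mem_filter] at hS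
      refine ⟨fun k hk => ?_, (hF S hS.1).2⟩
      have h1 := Finset.mem_range.mp ((hF S hS.1).1 hk)
      have h2 : k ≠ N := fun he => hS.2 (he ▸ hk)
      exact Finset.mem_range.mpr (by omega)
    have hmemF₁ : ∀ S ∈ F₁, N ∈ S ∧ S ∈ F := by
      intro S hS; rw [hF₁def, Finset.mem_filter] at hS; exact ⟨hS.2, hS.1⟩
    have hsubE : ∀ S ∈ F₁, S.erase N ⊆ Finset.range N := by
      intro S hS k hk
      have h1 := Finset.mem_range.mp ((hF S (hmemF₁ S hS).2).1 (Finset.erase_subset _ _ hk))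
      have h2 : k ≠ N := Finset.ne_of_mem_erase hk
      exact Finset.mem_range.mpr (by omega)
    have hFsplit : ∀ (ψ : Finset ℕ → ℝ), ∑ S ∈ F, ψ S = ∑ S ∈ F₀, ψ S + ∑ S ∈ F₁, ψ S := by
      intro ψ
      rw [hF₀def, hF₁def, ← Finset.sum_filter_add_sum_filter_not F (fun S => N ∉ S)]
      congr 1
      apply Finset.sum_congr _ (fun _ _ => rfl)
      apply Finset.filter_congr
      intro S _
      simp [not_not]
    have hfg : ∀ m ∈ Finset.range (2 ^ N),
        (∑ S ∈ F, c S * chi S m) = g m + h m := by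
      intro m hm
      rw [hFsplit]
      have e2 : ∑ S ∈ F₁, c S * chi S m = h m := by
        rw [hhdef]
        refine Finset.sum_congr rfl fun S hS => ?_
        rw [chi_erase (hmemF₁ S hS).1, fct_top_lt (Finset.mem_range.mp hm), one_mul]
      rw [e2]
    have hfg' : ∀ m ∈ Finset.range (2 ^ N),
        (∑ S ∈ F, c S * chi S (2 ^ N + m)) = g m - h m := by
      intro m hm
      rw [hFsplit]
      have e1 : ∑ S ∈ F₀, c S * chi S (2 ^ N + m) = g m := by
        refine Finset.sum_congr rfl fun S hS => ?_
        rw [chi_shift (hsub₀ S hS).1]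
      have e2 : ∑ S ∈ F₁, c S * chi S (2 ^ N + m) = -h m := by
        rw [hhdef, ← Finset.sum_neg_distrib]
        refine Finset.sum_congr rfl fun S hS => ?_
        rw [chi_erase (hmemF₁ S hS).1, fct_top_ge (Finset.mem_range.mp hm),
          chi_shift (hsubE S hS)]
        ring
      rw [e1, e2]
      ring
    have hsplit : ∀ (φ : ℕ → ℝ), ∑ m ∈ Finset.range (2 ^ (N + 1)), φ m
        = ∑ m ∈ Finset.range (2 ^ N), φ m + ∑ m ∈ Finset.range (2 ^ N), φ (2 ^ N + m) := by
      intro φ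
      have hpow : 2 ^ (N + 1) = 2 ^ N + 2 ^ N := by rw [pow_succ, Nat.mul_two]
      rw [hpow, Finset.sum_range_add]
    set A := ∑ m ∈ Finset.range (2 ^ N), g m ^ 2 with hA
    set B := ∑ m ∈ Finset.range (2 ^ N), h m ^ 2 with hB
    set G4 := ∑ m ∈ Finset.range (2 ^ N), g m ^ 4 with hG4
    set H4 := ∑ m ∈ Finset.range (2 ^ N), h m ^ 4 with hH4
    set X := ∑ m ∈ Finset.range (2 ^ N), g m ^ 2 * h m ^ 2 with hX
    have hT2 : ∑ m ∈ Finset.range (2 ^ (N + 1)), (∑ S ∈ F, c S * chi S m) ^ 2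
        = 2 * A + 2 * B := by
      rw [hsplit]
      have e1 : ∑ m ∈ Finset.range (2 ^ N), (∑ S ∈ F, c S * chi S m) ^ 2
          = ∑ m ∈ Finset.range (2 ^ N), (g m + h m) ^ 2 :=
        Finset.sum_congr rfl fun m hm => by rw [hfg m hm]
      have e2 : ∑ m ∈ Finset.range (2 ^ N), (∑ S ∈ F, c S * chi S (2 ^ N + m)) ^ 2
          = ∑ m ∈ Finset.range (2 ^ N), (g m - h m) ^ 2 :=
        Finset.sum_congr rfl fun m hm => by rw [hfg' m hm]
      rw [e1, e2, hA, hB, Finset.mul_sum, Finset.mul_sum, ← Finset.sum_add_distrib,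
        ← Finset.sum_add_distrib]
      exact Finset.sum_congr rfl fun m _ => by ring
    have hT4 : ∑ m ∈ Finset.range (2 ^ (N + 1)), (∑ S ∈ F, c S * chi S m) ^ 4
        = 2 * G4 + 12 * X + 2 * H4 := by
      rw [hsplit]
      have e1 : ∑ m ∈ Finset.range (2 ^ N), (∑ S ∈ F, c S * chi S m) ^ 4
          = ∑ m ∈ Finset.range (2 ^ N), (g m + h m) ^ 4 :=
        Finset.sum_congr rfl fun m hm => by rw [hfg m hm]
      have e2 : ∑ m ∈ Finset.range (2 ^ N), (∑ S ∈ F, c S * chi S (2 ^ N + m)) ^ 4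
          = ∑ m ∈ Finset.range (2 ^ N), (g m - h m) ^ 4 :=
        Finset.sum_congr rfl fun m hm => by rw [hfg' m hm]
      rw [e1, e2, hG4, hX, hH4, Finset.mul_sum, Finset.mul_sum, Finset.mul_sum,
        ← Finset.sum_add_distrib, ← Finset.sum_add_distrib, ← Finset.sum_add_distrib]
      exact Finset.sum_congr rfl fun m _ => by ring
    have hAnn : 0 ≤ A := Finset.sum_nonneg fun m _ => sq_nonneg _
    have hBnn : 0 ≤ B := Finset.sum_nonneg fun m _ => sq_nonneg _
    have hXnn : 0 ≤ X := Finset.sum_nonneg fun m _ =>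
      mul_nonneg (sq_nonneg _) (sq_nonneg _)
    have hG4nn : 0 ≤ G4 := Finset.sum_nonneg fun m _ => by positivity
    have hH4nn : 0 ≤ H4 := Finset.sum_nonneg fun m _ => by positivity
    have hCS : X ^ 2 ≤ G4 * H4 := by
      have hcs := Finset.sum_mul_sq_le_sq_mul_sq (Finset.range (2 ^ N))
        (fun m => g m ^ 2) (fun m => h m ^ 2)
      calc X ^ 2 ≤ (∑ m ∈ Finset.range (2 ^ N), (g m ^ 2) ^ 2)
            * ∑ m ∈ Finset.range (2 ^ N), (h m ^ 2) ^ 2 := hcs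
        _ = G4 * H4 := by
            rw [hG4, hH4]
            congr 1 <;> exact Finset.sum_congr rfl fun m _ => by ring
    have IHg : (2:ℝ) ^ N * G4 ≤ 9 ^ d * A ^ 2 := ih d F₀ c hsub₀
    rw [hT2, hT4]
    rcases d with _ | d'
    · have hF₁e : F₁ = ∅ := by
        rw [Finset.eq_empty_iff_forall_notMem]
        intro S hS
        have h1 := (hmemF₁ S hS).1
        have h2 := (hF S (hmemF₁ S hS).2).2
        have h3 : 1 ≤ S.card := Finset.card_pos.mpr ⟨N, h1⟩
        omega
      have hh0 : ∀ m, h m = 0 := fun m => by rw [hhdef]; simp [hF₁e]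
      have hB0 : B = 0 := by rw [hB]; simp [hh0]
      have hH40 : H4 = 0 := by rw [hH4]; simp [hh0]
      have hX0 : X = 0 := by rw [hX]; simp [hh0]
      rw [hB0, hH40, hX0, pow_succ]
      simp only [pow_zero, one_mul] at IHg ⊢
      nlinarith [IHg]
    · have IHh : (2:ℝ) ^ N * H4 ≤ 9 ^ d' * B ^ 2 := by
        have hinj : ∀ S ∈ F₁, ∀ S' ∈ F₁, S.erase N = S'.erase N → S = S' := by
          intro S hS S' hS' he
          rw [← Finset.insert_erase (hmemF₁ S hS).1, he,
            Finset.insert_erase (hmemF₁ S' hS').1]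
        have hre : ∀ m, h m = ∑ T ∈ F₁.image (fun S => S.erase N),
            c (insert N T) * chi T m := by
          intro m
          rw [Finset.sum_image hinj]
          exact Finset.sum_congr rfl fun S hS => by
            rw [Finset.insert_erase (hmemF₁ S hS).1]
        have hcond : ∀ T ∈ F₁.image (fun S => S.erase N),
            T ⊆ Finset.range N ∧ T.card ≤ d' := by
          intro T hT
          obtain ⟨S, hS, rfl⟩ := Finset.mem_image.mp hT
          refine ⟨hsubE S hS, ?_⟩
          have h1 := (hF S (hmemF₁ S hS).2).2
          have h2 := Finset.card_erase_of_mem (hmemF₁ S hS).1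
          omega
        have hih := ih d' (F₁.image (fun S => S.erase N)) (fun T => c (insert N T)) hcond
        calc (2:ℝ) ^ N * H4 = (2:ℝ) ^ N * ∑ m ∈ Finset.range (2 ^ N),
              (∑ T ∈ F₁.image (fun S => S.erase N), c (insert N T) * chi T m) ^ 4 := by
              rw [hH4]; congr 1; exact Finset.sum_congr rfl fun m _ => by rw [hre]
          _ ≤ 9 ^ d' * (∑ m ∈ Finset.range (2 ^ N),
              (∑ T ∈ F₁.image (fun S => S.erase N), c (insert N T) * chi T m) ^ 2) ^ 2 := hih
          _ = 9 ^ d' * B ^ 2 := by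
              rw [hB]; congr 2; exact Finset.sum_congr rfl fun m _ => by rw [hre]
      have h9 : (0:ℝ) ≤ 9 ^ d' := by positivity
      have hXb : (2:ℝ) ^ N * X ≤ 3 * 9 ^ d' * (A * B) := by
        refine sq_le_sq_of _ _ ?_ (by positivity) (by positivity)
        have hmul : ((2:ℝ) ^ N * G4) * ((2:ℝ) ^ N * H4)
            ≤ (9 ^ (d' + 1) * A ^ 2) * (9 ^ d' * B ^ 2) :=
          mul_le_mul IHg IHh (by positivity) (by positivity)
        have e2 : (3 * (9:ℝ) ^ d' * (A * B)) ^ 2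
            = 9 ^ (d' + 1) * A ^ 2 * (9 ^ d' * B ^ 2) := by
          rw [pow_succ]; ring
        calc ((2:ℝ) ^ N * X) ^ 2 = (2:ℝ) ^ N * (2:ℝ) ^ N * X ^ 2 := by ring
          _ ≤ (2:ℝ) ^ N * (2:ℝ) ^ N * (G4 * H4) := by
              have hh := mul_le_mul_of_nonneg_left hCS
                (show (0:ℝ) ≤ 2 ^ N * 2 ^ N by positivity)
              linarith
          _ = ((2:ℝ) ^ N * G4) * ((2:ℝ) ^ N * H4) := by ring
          _ ≤ (9 ^ (d' + 1) * A ^ 2) * (9 ^ d' * B ^ 2) := hmul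
          _ = (3 * (9:ℝ) ^ d' * (A * B)) ^ 2 := e2.symm
      rw [pow_succ (2:ℝ), pow_succ (9:ℝ)]
      rw [pow_succ (9:ℝ)] at IHg
      nlinarith [IHg, IHh, hXb, mul_nonneg h9 (sq_nonneg B),
        mul_nonneg h9 (mul_nonneg hAnn hBnn)]


lemma rademacher_eq_fct {n k m : ℕ} (hk1 : 1 ≤ k) (hkn : k ≤ n) (_hm : m < 2 ^ (n - 1))
    {t : ℝ} (ht : t ∈ Set.Ico ((m : ℝ) / 2 ^ (n - 1)) (((m : ℝ) + 1) / 2 ^ (n - 1))) :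
    rademacher k t = fct (n - k) m := by
  have hfl : ⌊(2:ℝ) ^ (k - 1) * t⌋ = ((m / 2 ^ (n - k) : ℕ) : ℤ) := by
    set a : ℝ := (2:ℝ) ^ (k - 1) with hadef
    set b : ℝ := (2:ℝ) ^ (n - k) with hbdef
    have hapos : (0:ℝ) < a := by positivity
    have hbpos : (0:ℝ) < b := by positivity
    have hab : (2:ℝ) ^ (n - 1) = a * b := by
      rw [hadef, hbdef, ← pow_add]; congr 1; omega
    set q : ℕ := m / 2 ^ (n - k) with hqdef
    have hq1 : (q : ℝ) * b ≤ (m : ℝ) := by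
      rw [hbdef]
      have := Nat.div_mul_le_self m (2 ^ (n - k))
      exact_mod_cast this
    have hq2 : (m : ℝ) + 1 ≤ ((q : ℝ) + 1) * b := by
      rw [hbdef]
      have h1 : m < (q + 1) * 2 ^ (n - k) := by
        have h2 := Nat.div_add_mod m (2 ^ (n - k))
        have h3 := Nat.mod_lt m (show 0 < 2 ^ (n - k) by positivity)
        calc m = 2 ^ (n - k) * q + m % 2 ^ (n - k) := by rw [hqdef, h2]
          _ < 2 ^ (n - k) * q + 2 ^ (n - k) := by omega
          _ = (q + 1) * 2 ^ (n - k) := by ring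
      have h4 : (m : ℝ) + 1 ≤ ((q + 1) * 2 ^ (n - k) : ℕ) := by exact_mod_cast h1
      push_cast at h4 ⊢
      linarith
    rw [Int.floor_eq_iff]
    constructor
    · push_cast
      have h5 : (q : ℝ) ≤ (m : ℝ) / b := by rw [le_div_iff₀ hbpos]; exact hq1
      have h6 : (m : ℝ) / (a * b) ≤ t := by rw [← hab]; exact ht.1
      have h7 : a * ((m : ℝ) / (a * b)) = (m : ℝ) / b := by field_simp
      have h8 : a * ((m : ℝ) / (a * b)) ≤ a * t :=
        mul_le_mul_of_nonneg_left h6 (le_of_lt hapos)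
      linarith
    · push_cast
      have h5 : t < ((m : ℝ) + 1) / (a * b) := by rw [← hab]; exact ht.2
      have h6 : a * (((m : ℝ) + 1) / (a * b)) = ((m : ℝ) + 1) / b := by field_simp
      have h7 : a * t < a * (((m : ℝ) + 1) / (a * b)) :=
        mul_lt_mul_of_pos_left h5 hapos
      have h8 : ((m : ℝ) + 1) / b ≤ (q : ℝ) + 1 := by
        rw [div_le_iff₀ hbpos]; linarith [hq2]
      linarith
  rw [rademacher, hfl, zpow_natCast]
  rfl

lemma integral_eq_sum (N : ℕ) (F : ℝ → ℝ) (G : ℕ → ℝ)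
    (hF : ∀ m : ℕ, m < 2 ^ N → ∀ t ∈ Set.Ico ((m : ℝ) / 2 ^ N) (((m : ℝ) + 1) / 2 ^ N), F t = G m) :
    ∫ t in Set.Icc (0:ℝ) 1, F t = (∑ m ∈ Finset.range (2 ^ N), G m) / 2 ^ N := by
  set ptn : ℕ → ℝ := fun m => (m : ℝ) / 2 ^ N with hptn
  have h2pos : (0:ℝ) < 2 ^ N := by positivity
  have hmono : ∀ m : ℕ, ptn m ≤ ptn (m + 1) := by
    intro m
    rw [hptn]
    exact (div_le_div_iff_of_pos_right h2pos).mpr (by push_cast; linarith)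
  have hae : ∀ m : ℕ, m < 2 ^ N →
      F =ᵐ[volume.restrict (Set.Ioc (ptn m) (ptn (m + 1)))] fun _ => G m := by
    intro m hm
    rw [Filter.EventuallyEq, ae_iff]
    rw [Measure.restrict_apply' measurableSet_Ioc]
    refine measure_mono_null ?_ (Real.volume_singleton (a := ptn (m + 1)))
    intro t ht
    obtain ⟨htne, ht2⟩ := ht
    simp only [Set.mem_singleton_iff]
    by_contra hne
    apply htne
    apply hF m hm
    have hc : ptn (m + 1) = ((m : ℝ) + 1) / 2 ^ N := by rw [hptn]; push_cast; ring
    exact ⟨le_of_lt ht2.1, hc ▸ lt_of_le_of_ne ht2.2 hne⟩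
  have hint : ∀ m : ℕ, m < 2 ^ N → IntervalIntegrable F volume (ptn m) (ptn (m + 1)) := by
    intro m hm
    rw [intervalIntegrable_iff, Set.uIoc_of_le (hmono m)]
    exact (integrableOn_const measure_Ioc_lt_top.ne).congr ((hae m hm).symm)
  have hpiece : ∀ m : ℕ, m < 2 ^ N → ∫ t in (ptn m)..(ptn (m + 1)), F t = G m / 2 ^ N := by
    intro m hm
    rw [intervalIntegral.integral_of_le (hmono m),
      MeasureTheory.integral_congr_ae (hae m hm), setIntegral_const, measureReal_def, Real.volume_Ioc]
    have hd : ptn (m + 1) - ptn m = 1 / 2 ^ N := by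
      rw [hptn]; push_cast; field_simp; ring
    rw [hd, ENNReal.toReal_ofReal (by positivity), smul_eq_mul]
    ring
  have hsum := intervalIntegral.sum_integral_adjacent_intervals
    (μ := volume) (a := ptn) (n := 2 ^ N) (fun k hk => hint k hk)
  have h0 : ptn 0 = 0 := by rw [hptn]; simp
  have h1 : ptn (2 ^ N) = 1 := by
    rw [hptn]; push_cast; field_simp
  calc ∫ t in Set.Icc (0:ℝ) 1, F t = ∫ t in Set.Ioc (0:ℝ) 1, F t :=
        integral_Icc_eq_integral_Ioc
    _ = ∫ t in (0:ℝ)..1, F t := (intervalIntegral.integral_of_le zero_le_one).symm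
    _ = ∑ m ∈ Finset.range (2 ^ N), ∫ t in (ptn m)..(ptn (m + 1)), F t := by
        rw [← h0, ← h1] ; exact hsum.symm
    _ = ∑ m ∈ Finset.range (2 ^ N), G m / 2 ^ N :=
        Finset.sum_congr rfl fun m hm => hpiece m (Finset.mem_range.mp hm)
    _ = (∑ m ∈ Finset.range (2 ^ N), G m) / 2 ^ N := by rw [Finset.sum_div]

end ChaosAux


open ChaosAux Finset

/-- The `L¹`-norm of a Rademacher chaos sum of order 2 dominates, up to an
absolute constant, the `ℓ²`-norm of its coefficients. -/
theorem chaos_L1_lower_bound :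
    ∃ c : ℝ, 0 < c ∧ ∀ n : ℕ, 2 ≤ n → ∀ a : ℕ → ℕ → ℝ,
      c * Real.sqrt (∑ i ∈ Finset.Icc 1 n, ∑ j ∈ Finset.Ioc i n, a i j ^ 2) ≤
        ∫ t in Set.Icc (0 : ℝ) 1,
          |∑ i ∈ Finset.Icc 1 n, ∑ j ∈ Finset.Ioc i n,
            a i j * (rademacher i t * rademacher j t)| := by
  classical
  refine ⟨1/9, by norm_num, ?_⟩
  intro n hn a
  set Q := ∑ i ∈ Finset.Icc 1 n, ∑ j ∈ Finset.Ioc i n, a i j ^ 2 with hQdef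
  set P : Finset ((_ : ℕ) × ℕ) := (Finset.Icc 1 n).sigma (fun i => Finset.Ioc i n) with hPdef
  set σ : ((_ : ℕ) × ℕ) → Finset ℕ :=
    fun p => if p.1 = 1 then {n - p.2} else {n - p.1, n - p.2} with hσdef
  have hmemP : ∀ p ∈ P, 1 ≤ p.1 ∧ p.1 < p.2 ∧ p.2 ≤ n := by
    intro p hp
    rw [hPdef, Finset.mem_sigma] at hp
    obtain ⟨h1, h2⟩ := hp
    rw [Finset.mem_Icc] at h1
    rw [Finset.mem_Ioc] at h2
    exact ⟨h1.1, h2.1, h2.2⟩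
  set fd : ℕ → ℝ := fun m => ∑ p ∈ P, a p.1 p.2 * chi (σ p) m with hfddef
  -- pointwise identity on dyadic intervals
  have hpoint : ∀ m : ℕ, m < 2 ^ (n-1) →
      ∀ t ∈ Set.Ico ((m : ℝ) / 2 ^ (n-1)) (((m : ℝ) + 1) / 2 ^ (n-1)),
      (fun t => |∑ i ∈ Finset.Icc 1 n, ∑ j ∈ Finset.Ioc i n,
        a i j * (rademacher i t * rademacher j t)|) t = (fun m => |fd m|) m := by
    intro m hm t ht
    simp only []
    congr 1
    have hL : ∑ i ∈ Finset.Icc 1 n, ∑ j ∈ Finset.Ioc i n,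
        a i j * (rademacher i t * rademacher j t)
        = ∑ p ∈ P, a p.1 p.2 * (rademacher p.1 t * rademacher p.2 t) := by
      rw [hPdef, Finset.sum_sigma]
    rw [hL, hfddef]
    refine Finset.sum_congr rfl fun p hp => ?_
    obtain ⟨h1, h2, h3⟩ := hmemP p hp
    have hri : rademacher p.1 t = fct (n - p.1) m :=
      rademacher_eq_fct h1 (by omega) hm ht
    have hrj : rademacher p.2 t = fct (n - p.2) m :=
      rademacher_eq_fct (by omega) h3 hm ht
    rw [hri, hrj]
    simp only [hσdef]
    by_cases hp1 : p.1 = 1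
    · rw [if_pos hp1, hp1]
      have hchi : chi {n - p.2} m = fct (n - p.2) m := by
        rw [chi, Finset.prod_singleton]
      rw [hchi]
      have hfct1 : fct (n - 1) m = 1 := fct_top_lt hm
      rw [hfct1, one_mul]
    · rw [if_neg hp1]
      have hne : n - p.1 ≠ n - p.2 := by omega
      rw [chi, Finset.prod_pair hne]
  have hσsub : ∀ p ∈ P, σ p ⊆ Finset.range (n - 1) := by
    intro p hp x hx
    obtain ⟨h1, h2, h3⟩ := hmemP p hp
    simp only [hσdef] at hx
    rw [Finset.mem_range]
    by_cases hp1 : p.1 = 1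
    · rw [if_pos hp1, Finset.mem_singleton] at hx
      omega
    · rw [if_neg hp1] at hx
      simp only [Finset.mem_insert, Finset.mem_singleton] at hx
      omega
  have hinj : Set.InjOn σ ↑P := by
    rintro ⟨i, j⟩ hp ⟨k, l⟩ hq he
    obtain ⟨h1, h2, h3⟩ := hmemP _ (by exact_mod_cast hp)
    obtain ⟨h4, h5, h6⟩ := hmemP _ (by exact_mod_cast hq)
    simp only at h1 h2 h3 h4 h5 h6
    simp only [hσdef] at he
    have hij : i = k ∧ j = l := by
      by_cases e1 : i = 1 <;> by_cases e2 : k = 1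
      · rw [if_pos e1, if_pos e2] at he
        have := Finset.singleton_injective he
        omega
      · rw [if_pos e1, if_neg e2] at he
        have hc := congrArg Finset.card he
        rw [Finset.card_singleton, Finset.card_pair (by omega : n - k ≠ n - l)] at hc
        omega
      · rw [if_neg e1, if_pos e2] at he
        have hc := congrArg Finset.card he
        rw [Finset.card_singleton, Finset.card_pair (by omega : n - i ≠ n - j)] at hc
        omega
      · rw [if_neg e1, if_neg e2] at he
        have m1 : n - i ∈ ({n - k, n - l} : Finset ℕ) := by rw [← he]; simp
        have m2 : n - j ∈ ({n - k, n - l} : Finset ℕ) := by rw [← he]; simp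
        have m3 : n - k ∈ ({n - i, n - j} : Finset ℕ) := by rw [he]; simp
        have m4 : n - l ∈ ({n - i, n - j} : Finset ℕ) := by rw [he]; simp
        simp only [Finset.mem_insert, Finset.mem_singleton] at m1 m2 m3 m4
        omega
    obtain ⟨rfl, rfl⟩ := hij
    rfl
  have hpars := parseval (n - 1) P σ (fun p => a p.1 p.2) hσsub hinj
  set F' := P.image σ with hF'def
  set c' : Finset ℕ → ℝ := fun S => ∑ p ∈ P.filter (fun p => σ p = S), a p.1 p.2 with hc'def
  have hfd_eq : ∀ m, fd m = ∑ S ∈ F', c' S * chi S m := by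
    intro m
    rw [hfddef]
    simp only []
    rw [← Finset.sum_fiberwise_of_maps_to (fun p hp => Finset.mem_image_of_mem σ hp)
      (fun p => a p.1 p.2 * chi (σ p) m)]
    refine Finset.sum_congr rfl fun S hS => ?_
    rw [hc'def]
    simp only []
    rw [Finset.sum_mul]
    refine Finset.sum_congr rfl fun p hp => ?_
    rw [(Finset.mem_filter.mp hp).2]
  have hcond : ∀ S ∈ F', S ⊆ Finset.range (n - 1) ∧ S.card ≤ 2 := by
    intro S hS
    obtain ⟨p, hp, rfl⟩ := Finset.mem_image.mp hS
    refine ⟨hσsub p hp, ?_⟩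
    simp only [hσdef]
    by_cases hp1 : p.1 = 1
    · rw [if_pos hp1, Finset.card_singleton]; omega
    · rw [if_neg hp1]
      exact le_trans (Finset.card_insert_le _ _) (by simp)
  set L := ∑ m ∈ Finset.range (2 ^ (n-1)), |fd m| with hLdef
  set S2 := ∑ m ∈ Finset.range (2 ^ (n-1)), fd m ^ 2 with hS2def
  set S4 := ∑ m ∈ Finset.range (2 ^ (n-1)), fd m ^ 4 with hS4def
  set C3 := ∑ m ∈ Finset.range (2 ^ (n-1)), |fd m| ^ 3 with hC3def
  have hI : (∫ t in Set.Icc (0:ℝ) 1,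
      |∑ i ∈ Finset.Icc 1 n, ∑ j ∈ Finset.Ioc i n,
        a i j * (rademacher i t * rademacher j t)|) = L / 2 ^ (n-1) := by
    rw [hLdef]
    exact integral_eq_sum (n-1) _ (fun m => |fd m|) hpoint
  have hS2Q : S2 = 2 ^ (n-1) * Q := by
    have h1 : Q = ∑ p ∈ P, (fun p => a p.1 p.2) p ^ 2 := by
      rw [hQdef, hPdef, Finset.sum_sigma]
    rw [hS2def, h1]
    exact hpars
  have hbon' : (2:ℝ) ^ (n-1) * S4 ≤ 81 * S2 ^ 2 := by
    have e4 : S4 = ∑ m ∈ Finset.range (2 ^ (n-1)), (∑ S ∈ F', c' S * chi S m) ^ 4 := by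
      rw [hS4def]; exact Finset.sum_congr rfl fun m _ => by rw [hfd_eq m]
    have e2 : S2 = ∑ m ∈ Finset.range (2 ^ (n-1)), (∑ S ∈ F', c' S * chi S m) ^ 2 := by
      rw [hS2def]; exact Finset.sum_congr rfl fun m _ => by rw [hfd_eq m]
    rw [e4, e2]
    have hb := bonami (n-1) 2 F' c' hcond
    norm_num at hb
    exact hb
  have hLnn : (0:ℝ) ≤ L := Finset.sum_nonneg fun _ _ => abs_nonneg _
  have hQnn : (0:ℝ) ≤ Q :=
    Finset.sum_nonneg fun i _ => Finset.sum_nonneg fun j _ => sq_nonneg _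
  have cs1 : S2 ^ 2 ≤ L * C3 := by
    have hcs := Finset.sum_mul_sq_le_sq_mul_sq (Finset.range (2 ^ (n-1)))
      (fun m => Real.sqrt |fd m|) (fun m => |fd m| * Real.sqrt |fd m|)
    calc S2 ^ 2 = (∑ m ∈ Finset.range (2 ^ (n-1)),
          Real.sqrt |fd m| * (|fd m| * Real.sqrt |fd m|)) ^ 2 := by
          rw [hS2def]; congr 1
          refine Finset.sum_congr rfl fun m _ => ?_
          rw [show Real.sqrt |fd m| * (|fd m| * Real.sqrt |fd m|)
            = (Real.sqrt |fd m| * Real.sqrt |fd m|) * |fd m| by ring,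
            Real.mul_self_sqrt (abs_nonneg _), abs_mul_abs_self, sq]
      _ ≤ (∑ m ∈ Finset.range (2 ^ (n-1)), Real.sqrt |fd m| ^ 2)
          * ∑ m ∈ Finset.range (2 ^ (n-1)), (|fd m| * Real.sqrt |fd m|) ^ 2 := hcs
      _ = L * C3 := by
          rw [hLdef, hC3def]
          congr 1
          · exact Finset.sum_congr rfl fun m _ => Real.sq_sqrt (abs_nonneg _)
          · refine Finset.sum_congr rfl fun m _ => ?_
            rw [mul_pow, Real.sq_sqrt (abs_nonneg _)]
            ring
  have cs2 : C3 ^ 2 ≤ S2 * S4 := by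
    have hcs := Finset.sum_mul_sq_le_sq_mul_sq (Finset.range (2 ^ (n-1)))
      (fun m => |fd m|) (fun m => fd m ^ 2)
    calc C3 ^ 2 = (∑ m ∈ Finset.range (2 ^ (n-1)), |fd m| * fd m ^ 2) ^ 2 := by
          rw [hC3def]; congr 1
          refine Finset.sum_congr rfl fun m _ => ?_
          rw [← sq_abs (fd m)]; ring
      _ ≤ (∑ m ∈ Finset.range (2 ^ (n-1)), |fd m| ^ 2)
          * ∑ m ∈ Finset.range (2 ^ (n-1)), (fd m ^ 2) ^ 2 := hcs
      _ = S2 * S4 := by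
          rw [hS2def, hS4def]
          congr 1
          · exact Finset.sum_congr rfl fun m _ => sq_abs _
          · exact Finset.sum_congr rfl fun m _ => by ring
  have hC3nn : (0:ℝ) ≤ C3 := Finset.sum_nonneg fun _ _ => by positivity
  rw [hI]
  clear_value Q P σ fd F' c' L S2 S4 C3
  rcases eq_or_lt_of_le hQnn with hQ0 | hQpos
  · rw [← hQ0, Real.sqrt_zero, mul_zero]
    exact div_nonneg hLnn (by positivity)
  · have hS2pos : (0:ℝ) < S2 := by
      rw [hS2Q]; exact mul_pos (by positivity) hQpos
    have key : (2:ℝ) ^ (n-1) * S2 ≤ 81 * L ^ 2 := by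
      have u1 : (S2 ^ 2) ^ 2 ≤ (L * C3) ^ 2 := pow_le_pow_left₀ (sq_nonneg S2) cs1 2
      have u2 : L ^ 2 * C3 ^ 2 ≤ L ^ 2 * (S2 * S4) :=
        mul_le_mul_of_nonneg_left cs2 (sq_nonneg L)
      have u3 : (2:ℝ) ^ (n-1) * ((S2 ^ 2) ^ 2) ≤ (2:ℝ) ^ (n-1) * (L ^ 2 * (S2 * S4)) := by
        refine mul_le_mul_of_nonneg_left ?_ (by positivity)
        calc (S2 ^ 2) ^ 2 ≤ (L * C3) ^ 2 := u1
          _ = L ^ 2 * C3 ^ 2 := by ring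
          _ ≤ L ^ 2 * (S2 * S4) := u2
      have u5 : L ^ 2 * S2 * ((2:ℝ) ^ (n-1) * S4) ≤ L ^ 2 * S2 * (81 * S2 ^ 2) :=
        mul_le_mul_of_nonneg_left hbon'
          (mul_nonneg (sq_nonneg L) (le_of_lt hS2pos))
      have u6 : (2:ℝ) ^ (n-1) * S2 ^ 4 ≤ 81 * L ^ 2 * S2 ^ 3 := by nlinarith [u3, u5]
      have hS23 : (0:ℝ) < S2 ^ 3 := by positivity
      refine le_of_mul_le_mul_right ?_ hS23
      calc (2:ℝ) ^ (n-1) * S2 * S2 ^ 3 = (2:ℝ) ^ (n-1) * S2 ^ 4 := by ring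
        _ ≤ 81 * L ^ 2 * S2 ^ 3 := u6
        _ = 81 * L ^ 2 * S2 ^ 3 := rfl
    have key2 : ((2:ℝ) ^ (n-1)) ^ 2 * Q ≤ 81 * L ^ 2 := by
      have e : (2:ℝ) ^ (n-1) * S2 = ((2:ℝ) ^ (n-1)) ^ 2 * Q := by rw [hS2Q]; ring
      linarith [key, e.symm.le, e.le]
    have hfin : (2:ℝ) ^ (n-1) * Real.sqrt Q ≤ 9 * L := by
      refine sq_le_sq_of _ _ ?_ (mul_nonneg (by positivity) (Real.sqrt_nonneg Q))
        (mul_nonneg (by norm_num) hLnn)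
      rw [mul_pow, Real.sq_sqrt hQnn]
      nlinarith [key2]
    rw [le_div_iff₀ (show (0:ℝ) < 2 ^ (n-1) by positivity)]
    linarith [hfin]
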